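/- For every n = 4^k (k ≥ 1), there exists a deterministic decision tree computing the complete binary AND-OR tree function F : {0,1}^n → {0,1} whose rank is at most (n+2)/3; i.e., rank(F) ≤ (n+2)/3. -/
import Mathlib


/-- A deterministic decision tree over `{0,1}^n`: every internal node is labeled
by a query index `i ∈ Fin n` and has exactly two children (a 0-child and a
1-child); every leaf is labeled by an output value. -/
inductive DTree (n : ℕ) : Type where
  | leaf (b : Bool) : DTree n
  | node (i : Fin n) (t0 t1 : DTree n) : DTree n

namespace DTree

/-- On input `x`, from each internal node labeled `i` follow the edge to the
`x i`-child; output the label of the leaf reached. -/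
def eval {n : ℕ} : DTree n → (Fin n → Bool) → Bool
  | leaf b, _ => b
  | node i t0 t1, x => if x i then t1.eval x else t0.eval x

/-- `DTSize`: the total number of nodes of the tree. -/
def size {n : ℕ} : DTree n → ℕ
  | leaf _ => 1
  | node _ t0 t1 => 1 + t0.size + t1.size

/-- The depth: the maximum number of edges on a root-to-leaf path. -/
def depth {n : ℕ} : DTree n → ℕ
  | leaf _ => 0
  | node _ t0 t1 => 1 + max t0.depth t1.depth

/-- The rank of a binary tree: a leaf has rank 0; an internal node whose two
children have ranks `r₁, r₂` has rank `max r₁ r₂` if `r₁ ≠ r₂`, and `r₁ + 1`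
if `r₁ = r₂`. -/
def rank {n : ℕ} : DTree n → ℕ
  | leaf _ => 0
  | node _ t0 t1 => if t0.rank = t1.rank then t0.rank + 1 else max t0.rank t1.rank

end DTree

/-- The decision tree `t` computes the total Boolean function `f`. -/
def ComputesFn {n : ℕ} (t : DTree n) (f : (Fin n → Bool) → Bool) : Prop :=
  ∀ x, t.eval x = f x

/-- The complete binary formula of depth `d` on `2^d` distinct variables whose
gate layers alternate; the root gate is `∨` if `g = true` and `∧` otherwise. -/
def andOr : (d : ℕ) → Bool → (Fin (2 ^ d) → Bool) → Bool
  | 0, _, x => x ⟨0, by norm_num⟩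
  | d + 1, g, x =>
      (fun L R => if g then L || R else L && R)
        (andOr d (!g) fun i => x ⟨i.val, by
          have h := i.isLt
          have h2 : 2 ^ (d + 1) = 2 ^ d + 2 ^ d := by rw [pow_succ]; omega
          omega⟩)
        (andOr d (!g) fun i => x ⟨2 ^ d + i.val, by
          have h := i.isLt
          have h2 : 2 ^ (d + 1) = 2 ^ d + 2 ^ d := by rw [pow_succ]; omega
          omega⟩)

/-- The complete binary AND-OR tree function `F : {0,1}^(4^k) → {0,1}`: the
complete binary formula of depth `log₂ (4^k) = 2k` with root gate `∨`,
alternating gate layers, and the `4^k` distinct variables at the leaves. -/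
def andOrTreeFn (k : ℕ) : (Fin (4 ^ k) → Bool) → Bool :=
  fun x => andOr (2 * k) true fun i => x (Fin.cast (by rw [pow_mul]; norm_num) i)

/-- `rank(f)`: the minimum rank of a decision tree computing `f`. -/
noncomputable def rankFn {n : ℕ} (f : (Fin n → Bool) → Bool) : ℕ :=
  sInf {r : ℕ | ∃ t : DTree n, ComputesFn t f ∧ t.rank = r}

-- auxiliary construction
def mkT {n : ℕ} : (d : ℕ) → Bool → (Fin (2 ^ d) → Fin n) → DTree n → DTree n → DTree n
  | 0, _, emb, t0, t1 => DTree.node (emb ⟨0, by norm_num⟩) t0 t1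
  | d + 1, g, emb, t0, t1 =>
      let embL : Fin (2 ^ d) → Fin n := fun i => emb ⟨i.val, by
        have h := i.isLt
        have h2 : 2 ^ (d + 1) = 2 ^ d + 2 ^ d := by rw [pow_succ]; omega
        omega⟩
      let embR : Fin (2 ^ d) → Fin n := fun i => emb ⟨2 ^ d + i.val, by
        have h := i.isLt
        have h2 : 2 ^ (d + 1) = 2 ^ d + 2 ^ d := by rw [pow_succ]; omega
        omega⟩
      if g then mkT d false embL (mkT d false embR t0 t1) t1
      else mkT d true embL t0 (mkT d true embR t0 t1)

lemma mkT_eval {n : ℕ} : ∀ (d : ℕ) (g : Bool) (emb : Fin (2 ^ d) → Fin n)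
    (t0 t1 : DTree n) (x : Fin n → Bool),
    (mkT d g emb t0 t1).eval x
      = if andOr d g (fun i => x (emb i)) then t1.eval x else t0.eval x := by
  intro d
  induction d with
  | zero => intro g emb t0 t1 x; rfl
  | succ d ih =>
      intro g emb t0 t1 x
      cases g with
      | false =>
          simp only [mkT, andOr, Bool.false_eq_true, if_false, Bool.not_false]
          rw [ih, ih]
          cases h1 : andOr d true (fun i => x (emb ⟨i.val, _⟩)) <;>
            cases h2 : andOr d true (fun i => x (emb ⟨2 ^ d + i.val, _⟩)) <;> simp_all
      | true =>
          simp only [mkT, andOr, if_true, Bool.not_true]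
          rw [ih, ih]
          cases h1 : andOr d false (fun i => x (emb ⟨i.val, _⟩)) <;>
            cases h2 : andOr d false (fun i => x (emb ⟨2 ^ d + i.val, _⟩)) <;> simp_all

/-- rank of `mkT` as a function of the continuation ranks. -/
def rnk : ℕ → Bool → ℕ → ℕ → ℕ
  | 0, _, a, b => if a = b then a + 1 else max a b
  | d + 1, true, a, b => rnk d false (rnk d false a b) b
  | d + 1, false, a, b => rnk d true a (rnk d true a b)

lemma mkT_rank {n : ℕ} : ∀ (d : ℕ) (g : Bool) (emb : Fin (2 ^ d) → Fin n)
    (t0 t1 : DTree n),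
    (mkT d g emb t0 t1).rank = rnk d g t0.rank t1.rank := by
  intro d
  induction d with
  | zero => intro g emb t0 t1; rfl
  | succ d ih =>
      intro g emb t0 t1
      cases g with
      | false => simp only [mkT, Bool.false_eq_true, if_false, rnk]; rw [ih, ih]
      | true => simp only [mkT, if_true, rnk]; rw [ih, ih]

/-- parameters: `P d` describes `rnk (d+1)`. -/
def P : ℕ → ℕ × ℕ
  | 0 => (0, 1)
  | d + 1 => (2 * (P d).2, (P d).1 + (P d).2)

lemma rnk_formula : ∀ (d : ℕ) (a b : ℕ),
    rnk (d + 1) true a b = max (max (a + (P d).1) (b + (P d).2)) (max (P d).1 (P d).2)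
    ∧ rnk (d + 1) false a b = max (max (a + (P d).2) (b + (P d).1)) (max (P d).1 (P d).2) := by
  intro d
  induction d with
  | zero =>
      intro a b
      simp only [rnk, P]
      constructor <;> split <;> split <;> omega
  | succ d ih =>
      intro a b
      constructor
      · show rnk (d + 1) false (rnk (d + 1) false a b) b = _
        rw [(ih a b).2, (ih _ b).2]
        simp only [P]
        omega
      · show rnk (d + 1) true a (rnk (d + 1) true a b) = _
        rw [(ih a b).1, (ih a _).1]
        simp only [P]
        omega

lemma P_closed : ∀ k : ℕ, 3 * (P (2 * k + 1)).1 = 4 ^ (k + 1) + 2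
    ∧ 3 * (P (2 * k + 1)).2 + 1 = 4 ^ (k + 1) := by
  intro k
  induction k with
  | zero => decide
  | succ k ih =>
      obtain ⟨ih1, ih2⟩ := ih
      have h1 : 2 * (k + 1) + 1 = (2 * k + 1) + 1 + 1 := by ring
      rw [h1]
      have e2 : P (2 * k + 1 + 1)
          = (2 * (P (2 * k + 1)).2, (P (2 * k + 1)).1 + (P (2 * k + 1)).2) := rfl
      have e3 : P (2 * k + 1 + 1 + 1)
          = (2 * (P (2 * k + 1 + 1)).2, (P (2 * k + 1 + 1)).1 + (P (2 * k + 1 + 1)).2) := rfl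
      rw [e3, e2]
      have h4 : 4 ^ (k + 1 + 1) = 4 * 4 ^ (k + 1) := by ring
      simp only []
      omega

/-- For every `n = 4^k` (`k ≥ 1`), there exists a deterministic
decision tree computing the complete binary AND-OR tree function
`F : {0,1}^n → {0,1}` whose rank is at most `(n + 2) / 3`;
i.e. `rank(F) ≤ (n + 2) / 3`. -/
theorem rank_andOrTreeFn_upper (k : ℕ) (hk : 1 ≤ k) :
    ∃ t : DTree (4 ^ k), ComputesFn t (andOrTreeFn k) ∧ 3 * t.rank ≤ 4 ^ k + 2 := by

  have hpow : 2 ^ (2 * k) = 4 ^ k := by rw [pow_mul]; norm_num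
  refine ⟨mkT (2 * k) true (Fin.cast hpow) (DTree.leaf false) (DTree.leaf true), ?_, ?_⟩
  · intro x
    rw [mkT_eval]
    have he : andOrTreeFn k x = andOr (2 * k) true (fun i => x (Fin.cast hpow i)) := rfl
    rw [he]
    cases andOr (2 * k) true (fun i => x (Fin.cast hpow i)) <;> rfl
  · rw [mkT_rank]
    simp only [DTree.rank]
    obtain ⟨k', rfl⟩ : ∃ k', k = k' + 1 := ⟨k - 1, by omega⟩
    have h1 : 2 * (k' + 1) = (2 * k' + 1) + 1 := by ring
    rw [h1, (rnk_formula (2 * k' + 1) 0 0).1]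
    obtain ⟨h2, h3⟩ := P_closed k'
    omega
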